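/- Let f : Matrix(d,o,ℝ) → ℝ be λ-strongly convex (λ>0) with minimizer W*, on a filtered probability space let (W_t)_{t≥1} be a sequence of d×o random matrices adapted to a filtration (F_t), and let (G_t)_{t≥1} be d×o random matrices such that for every t: E[G_t | F_t] = ∇f(W_t) almost surely, E[‖G_t‖_F²] ≤ u for a constant u ≥ 0, and W_{t+1} = W_t − (1/(λt))·G_t. Then for every T ≥ 1, E[‖W_T − W*‖_F²] ≤ 4u/(λ²T). -/

import Mathlib

open MeasureTheory ProbabilityTheory

section ConvexAux

variable {E : Type*} [NormedAddCommGroup E] [InnerProductSpace ℝ E] [CompleteSpace E]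

/-- First-order condition for a convex differentiable function. -/
lemma aux_first_order {g : E → ℝ} (hg : ConvexOn ℝ Set.univ g)
    {g' : E → E} (hg' : ∀ x, HasGradientAt g (g' x) x) (a b : E) :
    (inner ℝ (g' a) (b - a) : ℝ) ≤ g b - g a := by
  set ψ : ℝ → ℝ := fun t => g (t • (b - a) + a) with hψ
  have hψconv : ConvexOn ℝ Set.univ ψ := by
    have haff := hg.comp_affineMap (AffineMap.lineMap a b : ℝ →ᵃ[ℝ] E)
    have : (AffineMap.lineMap a b : ℝ →ᵃ[ℝ] E) ⁻¹' Set.univ = Set.univ := by simp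
    rw [this] at haff
    have e : ψ = g ∘ (AffineMap.lineMap a b : ℝ →ᵃ[ℝ] E) := by
      funext t; simp [ψ, AffineMap.lineMap_apply]
    rw [e]; exact haff

  have hψd : ∀ t : ℝ, HasDerivAt ψ (inner ℝ (g' (t • (b - a) + a)) (b - a) : ℝ) t := by
    intro t
    have hc : HasDerivAt (fun t : ℝ => t • (b - a) + a) (b - a) t := by
      simpa using ((hasDerivAt_id t).smul_const (b - a)).add_const a
    have hF : HasFDerivAt g (InnerProductSpace.toDual ℝ E (g' (t • (b - a) + a)))
        (t • (b - a) + a) := hasGradientAt_iff_hasFDerivAt.mp (hg' _)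
    have := hF.comp_hasDerivAt t hc
    simp only [InnerProductSpace.toDual_apply_apply] at this
    exact this
  have hslope := hψconv.deriv_le_slope (Set.mem_univ (0 : ℝ)) (Set.mem_univ (1 : ℝ))
    one_pos (hψd 0).differentiableAt
  rw [(hψd 0).deriv, slope_def_field] at hslope
  have h0 : ψ 0 = g a := by simp [ψ]
  have h1 : ψ 1 = g b := by simp [ψ]
  simpa [h0, h1] using hslope

lemma aux_mono {g : E → ℝ} (hg : ConvexOn ℝ Set.univ g)
    {g' : E → E} (hg' : ∀ x, HasGradientAt g (g' x) x) (a b : E) :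
    0 ≤ (inner ℝ (g' b - g' a) (b - a) : ℝ) := by
  have h1 := aux_first_order hg hg' a b
  have h2 := aux_first_order hg hg' b a
  have h2' : -(inner ℝ (g' b) (b - a) : ℝ) ≤ g a - g b := by
    rw [show a - b = -(b - a) from (neg_sub b a).symm] at h2
    rwa [inner_neg_right] at h2
  rw [inner_sub_left]
  linarith

/-- Strong convexity gradient inequality at the minimizer. -/
lemma aux_strong (f : E → ℝ) (lam : ℝ)
    (hconv : ConvexOn ℝ Set.univ fun V => f V - lam / 2 * ‖V‖ ^ 2)
    (hdiff : Differentiable ℝ f)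
    (Wstar : E) (hmin : ∀ V, f Wstar ≤ f V) (x : E) :
    lam * ‖x - Wstar‖ ^ 2 ≤ (inner ℝ (gradient f x) (x - Wstar) : ℝ) := by
  set g : E → ℝ := fun V => f V - lam / 2 * ‖V‖ ^ 2 with hgdef
  have hg' : ∀ y : E, HasGradientAt g (gradient f y - lam • y) y := by
    intro y
    rw [hasGradientAt_iff_hasFDerivAt]
    have h1 : HasFDerivAt f (InnerProductSpace.toDual ℝ E (gradient f y)) y :=
      hasGradientAt_iff_hasFDerivAt.mp (hdiff y).hasGradientAt
    have h2 : HasFDerivAt (fun y : E => ‖y‖ ^ 2) (2 • (innerSL ℝ y)) y := by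
      simpa using (hasFDerivAt_id y).norm_sq
    have h3 := h1.sub (h2.const_mul (lam / 2))
    refine h3.congr_fderiv ?_
    ext v
    simp [InnerProductSpace.toDual_apply_apply, inner_sub_left, inner_smul_left, real_inner_smul_left]
    ring
  have hgradmin : gradient f Wstar = 0 := by
    have hloc : IsLocalMin f Wstar := Filter.Eventually.of_forall hmin
    have hF : HasFDerivAt f (InnerProductSpace.toDual ℝ E (gradient f Wstar)) Wstar :=
      hasGradientAt_iff_hasFDerivAt.mp (hdiff Wstar).hasGradientAt
    have h0 := hloc.hasFDerivAt_eq_zero hF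
    have := congrArg (fun L => (InnerProductSpace.toDual ℝ E).symm L) h0
    simpa only [LinearIsometryEquiv.symm_apply_apply, map_zero] using this
  have hmono := aux_mono hconv hg' Wstar x
  rw [show gradient f x - lam • x - (gradient f Wstar - lam • Wstar)
      = gradient f x - lam • (x - Wstar) by rw [hgradmin]; module] at hmono
  rw [inner_sub_left, real_inner_smul_left, real_inner_self_eq_norm_sq] at hmono
  linarith

end ConvexAux

lemma aux_integrable_inner {α E : Type*} [NormedAddCommGroup E] [InnerProductSpace ℝ E]
    {m : MeasurableSpace α} {μ : Measure α} {f g : α → E}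
    (hf : MemLp f 2 μ) (hg : MemLp g 2 μ) :
    Integrable (fun x => (inner ℝ (f x) (g x) : ℝ)) μ := by
  have h := L2.integrable_inner (𝕜 := ℝ) (hf.toLp f) (hg.toLp g)
  refine h.congr ?_
  filter_upwards [hf.coeFn_toLp, hg.coeFn_toLp] with x h1 h2
  rw [h1, h2]

lemma aux_condexp_clm {α E F : Type*}
    [NormedAddCommGroup E] [NormedSpace ℝ E] [CompleteSpace E]
    [NormedAddCommGroup F] [NormedSpace ℝ F] [CompleteSpace F]
    {m m0 : MeasurableSpace α} (hm : m ≤ m0) {μ : Measure α} [IsFiniteMeasure μ]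
    (L : E →L[ℝ] F) {Y : α → E} (hY : Integrable Y μ) :
    (fun ω => L (condExp m μ Y ω)) =ᵐ[μ] condExp m μ (fun ω => L (Y ω)) := by
  refine ae_eq_condExp_of_forall_setIntegral_eq hm (L.integrable_comp hY)
    (fun s _ _ => (L.integrable_comp integrable_condExp).integrableOn)
    (fun s hs hμs => ?_) ?_
  · rw [L.integral_comp_comm integrable_condExp.integrableOn,
      L.integral_comp_comm hY.integrableOn, setIntegral_condExp hm hY hs]
  · exact (L.continuous.comp_stronglyMeasurable stronglyMeasurable_condExp).aestronglyMeasurable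

/-- Rakhlin et al., Lemma 1, as used for Theorem 2: stochastic gradient
descent with step sizes `η_t = 1/(λt)` on a `λ`-strongly convex differentiable function
`f` on the Euclidean space of `d×o` matrices (Frobenius inner product), with adapted
iterates `W_t`, conditionally unbiased gradient estimates `G_t` with uniformly bounded
second moments `E‖G_t‖² ≤ u`, satisfies `E‖W_T − W*‖² ≤ 4u/(λ²T)` for all `T ≥ 1`. -/
theorem stmt_7 (d o : ℕ)
    (Ω : Type*) [m0 : MeasurableSpace Ω] (μ : Measure Ω) [IsProbabilityMeasure μ]
    (ℱ : Filtration ℕ m0)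
    (f : EuclideanSpace ℝ (Fin d × Fin o) → ℝ)
    (lam : ℝ) (hlam : 0 < lam)
    (hconv : ConvexOn ℝ Set.univ fun V => f V - lam / 2 * ‖V‖ ^ 2)
    (hdiff : Differentiable ℝ f)
    (Wstar : EuclideanSpace ℝ (Fin d × Fin o))
    (hmin : ∀ V, f Wstar ≤ f V)
    (W G : ℕ → Ω → EuclideanSpace ℝ (Fin d × Fin o))
    (hadapt : Adapted ℱ W)
    (u : ℝ) (hu : 0 ≤ u)
    (hL2 : ∀ t, MemLp (G t) 2 μ)
    (hunbiased : ∀ t, 1 ≤ t → μ[G t|ℱ t] =ᵐ[μ] fun ω => gradient f (W t ω))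
    (hbound : ∀ t, 1 ≤ t → ∫ ω, ‖G t ω‖ ^ 2 ∂μ ≤ u)
    (hupdate : ∀ t : ℕ, 1 ≤ t → W (t + 1) = fun ω => W t ω - (1 / (lam * t)) • G t ω) :
    ∀ T : ℕ, 1 ≤ T → ∫ ω, ‖W T ω - Wstar‖ ^ 2 ∂μ ≤ 4 * u / (lam ^ 2 * T) := by
  by_cases hW1 : MemLp (W 1) 2 μ
  swap
  · -- degenerate case: `W 1` is not square integrable, all integrals are zero
    have hnot : ∀ t, 1 ≤ t → ¬ MemLp (W t) 2 μ := by
      intro t ht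
      induction t, ht using Nat.le_induction with
      | base => exact hW1
      | succ t ht ih =>
        intro h
        apply ih
        have hWt : W t = fun ω => W (t + 1) ω + (1 / (lam * t)) • G t ω := by
          funext ω
          rw [hupdate t ht]
          module
        rw [hWt]
        exact h.add ((hL2 t).const_smul (1 / (lam * t)))
    intro T hT
    have hint : ¬ Integrable (fun ω => ‖W T ω - Wstar‖ ^ 2) μ := by
      intro h
      apply hnot T hT
      have hXm : AEStronglyMeasurable (fun ω => W T ω - Wstar) μ :=
        (((hadapt T).mono (ℱ.le T) le_rfl).aestronglyMeasurable).sub aestronglyMeasurable_const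
      have hXmem : MemLp (fun ω => W T ω - Wstar) 2 μ :=
        (memLp_two_iff_integrable_sq_norm hXm).mpr h
      have heq : ((fun ω => W T ω - Wstar) + fun _ => Wstar) = W T := by
        funext ω; simp
      exact heq ▸ hXmem.add (memLp_const Wstar)
    rw [integral_undef hint]
    positivity
  · -- main case
    have hWL2 : ∀ t, 1 ≤ t → MemLp (W t) 2 μ := by
      intro t ht
      induction t, ht using Nat.le_induction with
      | base => exact hW1
      | succ t ht ih =>
        rw [hupdate t ht]
        exact ih.sub ((hL2 t).const_smul (1 / (lam * t)))
    have hXL2 : ∀ t, 1 ≤ t → MemLp (fun ω => W t ω - Wstar) 2 μ :=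
      fun t ht => (hWL2 t ht).sub (memLp_const _)
    have hX2int : ∀ t, 1 ≤ t → Integrable (fun ω => ‖W t ω - Wstar‖ ^ 2) μ :=
      fun t ht => (memLp_two_iff_integrable_sq_norm (hXL2 t ht).1).mp (hXL2 t ht)
    have hG2int : ∀ t, Integrable (fun ω => ‖G t ω‖ ^ 2) μ :=
      fun t => (memLp_two_iff_integrable_sq_norm (hL2 t).1).mp (hL2 t)
    have hA0 : ∀ t, 0 ≤ ∫ ω, ‖W t ω - Wstar‖ ^ 2 ∂μ :=
      fun t => integral_nonneg fun ω => by positivity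
    -- cross term: replace G by the gradient under the integral
    have hcross : ∀ t, 1 ≤ t →
        Integrable (fun ω => (inner ℝ (W t ω - Wstar) (gradient f (W t ω)) : ℝ)) μ ∧
        ∫ ω, (inner ℝ (W t ω - Wstar) (G t ω) : ℝ) ∂μ
          = ∫ ω, (inner ℝ (W t ω - Wstar) (gradient f (W t ω)) : ℝ) ∂μ := by
      intro t ht
      have hm : ℱ t ≤ m0 := ℱ.le t
      have hGint : Integrable (G t) μ := (hL2 t).integrable one_le_two
      have hXSM : StronglyMeasurable[ℱ t] (fun ω => W t ω - Wstar) :=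
        (hadapt t).stronglyMeasurable.sub stronglyMeasurable_const
      have hkey : ∀ i : Fin d × Fin o,
          Integrable (fun ω => (W t ω - Wstar) i * G t ω i) μ ∧
          Integrable (fun ω => (W t ω - Wstar) i * gradient f (W t ω) i) μ ∧
          ∫ ω, (W t ω - Wstar) i * G t ω i ∂μ
            = ∫ ω, (W t ω - Wstar) i * gradient f (W t ω) i ∂μ := by
        intro i
        have hproj := aux_condexp_clm hm (EuclideanSpace.proj (𝕜 := ℝ) i) hGint
        have hDi : condExp (ℱ t) μ (fun ω => G t ω i)
            =ᵐ[μ] fun ω => gradient f (W t ω) i := by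
          refine hproj.symm.trans ?_
          filter_upwards [hunbiased t ht] with ω hω
          rw [show (EuclideanSpace.proj (𝕜 := ℝ) i) ((μ[G t|ℱ t]) ω)
              = (μ[G t|ℱ t]) ω i from rfl, hω]
        have hXi2 : MemLp (fun ω => (W t ω - Wstar) i) 2 μ := by
          have := (EuclideanSpace.proj (𝕜 := ℝ) i).comp_memLp' (hXL2 t ht)
          exact this
        have hGi2 : MemLp (fun ω => G t ω i) 2 μ := by
          have := (EuclideanSpace.proj (𝕜 := ℝ) i).comp_memLp' (hL2 t)
          exact this
        have hXiGi : Integrable (fun ω => (W t ω - Wstar) i * G t ω i) μ := by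
          have := aux_integrable_inner hGi2 hXi2
          simpa [RCLike.inner_apply, starRingEnd_apply] using this
        have hXiSM : StronglyMeasurable[ℱ t] (fun ω => (W t ω - Wstar) i) :=
          (EuclideanSpace.proj (𝕜 := ℝ) i).continuous.comp_stronglyMeasurable hXSM
        have hGiInt : Integrable (fun ω => G t ω i) μ := hGi2.integrable one_le_two
        have hmul := condExp_mul_of_stronglyMeasurable_left hXiSM hXiGi hGiInt
        have heq2 : condExp (ℱ t) μ (fun ω => (W t ω - Wstar) i * G t ω i)
            =ᵐ[μ] fun ω => (W t ω - Wstar) i * gradient f (W t ω) i := by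
          refine hmul.trans ?_
          filter_upwards [hDi] with ω hω
          simp only [Pi.mul_apply]
          rw [hω]
        refine ⟨hXiGi, integrable_condExp.congr heq2, ?_⟩
        calc ∫ ω, (W t ω - Wstar) i * G t ω i ∂μ
            = ∫ ω, condExp (ℱ t) μ (fun ω => (W t ω - Wstar) i * G t ω i) ω ∂μ :=
              (integral_condExp hm).symm
          _ = ∫ ω, (W t ω - Wstar) i * gradient f (W t ω) i ∂μ := integral_congr_ae heq2
      have hinnerG : (fun ω => (inner ℝ (W t ω - Wstar) (G t ω) : ℝ))
          = fun ω => ∑ i : Fin d × Fin o, (W t ω - Wstar) i * G t ω i := by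
        funext ω
        simp only [PiLp.inner_apply, RCLike.inner_apply, conj_trivial, mul_comm]
      have hinnerD : (fun ω => (inner ℝ (W t ω - Wstar) (gradient f (W t ω)) : ℝ))
          = fun ω => ∑ i : Fin d × Fin o, (W t ω - Wstar) i * gradient f (W t ω) i := by
        funext ω
        simp only [PiLp.inner_apply, RCLike.inner_apply, conj_trivial, mul_comm]
      constructor
      · rw [hinnerD]
        exact integrable_finset_sum _ fun i _ => (hkey i).2.1
      · rw [hinnerG, hinnerD,
          integral_finset_sum _ fun i _ => (hkey i).1,
          integral_finset_sum _ fun i _ => (hkey i).2.1]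
        exact Finset.sum_congr rfl fun i _ => (hkey i).2.2
    -- one-step recursion
    have hrec : ∀ t : ℕ, 1 ≤ t →
        ∫ ω, ‖W (t + 1) ω - Wstar‖ ^ 2 ∂μ
          ≤ (1 - 2 / (t : ℝ)) * ∫ ω, ‖W t ω - Wstar‖ ^ 2 ∂μ + u / (lam ^ 2 * (t : ℝ) ^ 2) := by
      intro t ht
      have htpos : (0 : ℝ) < (t : ℝ) := by exact_mod_cast ht
      set η : ℝ := 1 / (lam * t) with hη
      have hηpos : 0 < η := by positivity
      have hpt : (fun ω => ‖W (t + 1) ω - Wstar‖ ^ 2)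
          = fun ω => ‖W t ω - Wstar‖ ^ 2
              - (2 * η) * (inner ℝ (W t ω - Wstar) (G t ω) : ℝ)
              + η ^ 2 * ‖G t ω‖ ^ 2 := by
        funext ω
        simp only [hupdate t ht]
        rw [← hη]
        rw [show W t ω - η • G t ω - Wstar = (W t ω - Wstar) - η • G t ω by abel]
        rw [norm_sub_sq_real, real_inner_smul_right, norm_smul]
        simp only [Real.norm_eq_abs, mul_pow, sq_abs]
        ring
      have hXG : Integrable (fun ω => (inner ℝ (W t ω - Wstar) (G t ω) : ℝ)) μ :=
        aux_integrable_inner (hXL2 t ht) (hL2 t)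
      have hsplit : ∫ ω, ‖W (t + 1) ω - Wstar‖ ^ 2 ∂μ
          = ∫ ω, ‖W t ω - Wstar‖ ^ 2 ∂μ
            - (2 * η) * ∫ ω, (inner ℝ (W t ω - Wstar) (G t ω) : ℝ) ∂μ
            + η ^ 2 * ∫ ω, ‖G t ω‖ ^ 2 ∂μ := by
        have hI3 : Integrable
            (fun ω => (2 * η) * (inner ℝ (W t ω - Wstar) (G t ω) : ℝ)) μ := hXG.const_mul _
        have hI1 : Integrable (fun ω => ‖W t ω - Wstar‖ ^ 2
            - (2 * η) * (inner ℝ (W t ω - Wstar) (G t ω) : ℝ)) μ := (hX2int t ht).sub hI3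
        have hI2 : Integrable (fun ω => η ^ 2 * ‖G t ω‖ ^ 2) μ := (hG2int t).const_mul _
        rw [hpt, integral_add hI1 hI2, integral_sub (hX2int t ht) hI3,
          integral_const_mul, integral_const_mul]
      have h1 : lam * ∫ ω, ‖W t ω - Wstar‖ ^ 2 ∂μ
          ≤ ∫ ω, (inner ℝ (W t ω - Wstar) (G t ω) : ℝ) ∂μ := by
        rw [(hcross t ht).2, ← integral_const_mul]
        refine integral_mono ((hX2int t ht).const_mul _) (hcross t ht).1 fun ω => ?_
        have := aux_strong f lam hconv hdiff Wstar hmin (W t ω)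
        rwa [real_inner_comm] at this
      have h2 : η ^ 2 * ∫ ω, ‖G t ω‖ ^ 2 ∂μ ≤ η ^ 2 * u :=
        mul_le_mul_of_nonneg_left (hbound t ht) (by positivity)
      have h3 : (2 * η) * (lam * ∫ ω, ‖W t ω - Wstar‖ ^ 2 ∂μ)
          ≤ (2 * η) * ∫ ω, (inner ℝ (W t ω - Wstar) (G t ω) : ℝ) ∂μ :=
        mul_le_mul_of_nonneg_left h1 (by positivity)
      have hee : (2 * η) * lam = 2 / (t : ℝ) := by
        rw [hη]; field_simp
      have heu : η ^ 2 * u = u / (lam ^ 2 * (t : ℝ) ^ 2) := by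
        rw [hη, div_pow, one_pow, mul_pow, one_div_mul_eq_div]
      calc ∫ ω, ‖W (t + 1) ω - Wstar‖ ^ 2 ∂μ
          ≤ ∫ ω, ‖W t ω - Wstar‖ ^ 2 ∂μ
              - (2 * η) * (lam * ∫ ω, ‖W t ω - Wstar‖ ^ 2 ∂μ) + η ^ 2 * u := by
            rw [hsplit]; linarith
        _ = (1 - 2 / (t : ℝ)) * ∫ ω, ‖W t ω - Wstar‖ ^ 2 ∂μ + u / (lam ^ 2 * (t : ℝ) ^ 2) := by
            rw [← hee, ← heu]; ring
    -- base bound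
    have hbase : ∫ ω, ‖W 1 ω - Wstar‖ ^ 2 ∂μ ≤ u / lam ^ 2 := by
      have := hrec 1 le_rfl
      have h2 := hA0 2
      push_cast at this
      norm_num at this
      linarith
    -- induction
    intro T hT
    induction T, hT using Nat.le_induction with
    | base =>
      calc ∫ ω, ‖W 1 ω - Wstar‖ ^ 2 ∂μ ≤ u / lam ^ 2 := hbase
        _ ≤ 4 * u / lam ^ 2 := by gcongr; linarith
        _ = 4 * u / (lam ^ 2 * ((1 : ℕ) : ℝ)) := by norm_num
    | succ T hT ih =>
      have hs1 : (1 : ℝ) ≤ (T : ℝ) := by exact_mod_cast hT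
      have hrecT := hrec T hT
      rcases eq_or_lt_of_le hT with h1 | h2
      · -- T = 1
        subst h1
        have hA1 := hA0 1
        have huv : (0 : ℝ) ≤ u / lam ^ 2 := by positivity
        have h4 : 4 * u / (lam ^ 2 * (((1 : ℕ) : ℝ) + 1)) = 2 * (u / lam ^ 2) := by
          push_cast; field_simp; ring
        push_cast at hrecT ⊢
        norm_num at hrecT
        linarith
      · -- T ≥ 2
        have hs2 : (2 : ℝ) ≤ (T : ℝ) := by exact_mod_cast h2
        have hcoef : 0 ≤ 1 - 2 / (T : ℝ) := by
          rw [sub_nonneg, div_le_one (by linarith)]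
          linarith
        have hmul : (1 - 2 / (T : ℝ)) * ∫ ω, ‖W T ω - Wstar‖ ^ 2 ∂μ
            ≤ (1 - 2 / (T : ℝ)) * (4 * u / (lam ^ 2 * (T : ℝ))) :=
          mul_le_mul_of_nonneg_left ih hcoef
        have hfinal : (1 - 2 / (T : ℝ)) * (4 * u / (lam ^ 2 * (T : ℝ))) + u / (lam ^ 2 * (T : ℝ) ^ 2)
            ≤ 4 * u / (lam ^ 2 * ((T : ℝ) + 1)) := by
          have hTpos : (0 : ℝ) < (T : ℝ) := by linarith
          have hdiffeq : 4 * u / (lam ^ 2 * ((T : ℝ) + 1))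
              - ((1 - 2 / (T : ℝ)) * (4 * u / (lam ^ 2 * (T : ℝ))) + u / (lam ^ 2 * (T : ℝ) ^ 2))
              = u * (3 * (T : ℝ) + 7) / (lam ^ 2 * ((T : ℝ) ^ 2 * ((T : ℝ) + 1))) := by
            field_simp
            ring
          have hnn : 0 ≤ u * (3 * (T : ℝ) + 7) / (lam ^ 2 * ((T : ℝ) ^ 2 * ((T : ℝ) + 1))) := by
            positivity
          linarith
        push_cast
        linarith
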